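/- For every subset γ of A, e_γ · γ = e_γ in ℤStyl(A), where γ on the right of e_γ denotes the image of the decreasing word on γ. -/

import Mathlib

noncomputable section

open FreeMonoid

/-- The defining relations of the stylic congruence: the Knuth (plactic)
relations together with the idempotent relations `a² ≡ a`. -/
inductive StylicRel (A : Type*) [LinearOrder A] : FreeMonoid A → FreeMonoid A → Prop
  | knuth1 {a b c : A} : a < b → b < c →
      StylicRel A (ofList [b, a, c]) (ofList [b, c, a])
  | knuth2 {a b c : A} : a < b → b < c →
      StylicRel A (ofList [a, c, b]) (ofList [c, a, b])
  | knuth3 {a b : A} : a < b →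
      StylicRel A (ofList [b, a, b]) (ofList [b, b, a])
  | knuth4 {a b : A} : a < b →
      StylicRel A (ofList [a, b, a]) (ofList [b, a, a])
  | idem (a : A) : StylicRel A (ofList [a, a]) (ofList [a])

/-- The stylic congruence on the free monoid `A*`. -/
def stylCon (A : Type*) [LinearOrder A] : Con (FreeMonoid A) := conGen (StylicRel A)

/-- The stylic monoid `Styl(A)`. -/
abbrev Styl (A : Type*) [LinearOrder A] := (stylCon A).Quotient

/-- The image of a letter `a` in the stylic algebra `ℤStyl(A)`. -/
def styGen {A : Type*} [LinearOrder A] (a : A) : MonoidAlgebra ℤ (Styl A) :=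
  MonoidAlgebra.of ℤ (Styl A) ((stylCon A).mk' (FreeMonoid.of a))

/-- The idempotent `e_γ = (∏_{a∉γ}^{↗} (1-a)) · (∏_{a∈γ}^{↘} a)` of `ℤStyl(A)`
associated with a column (subset) `γ ⊆ A`. -/
def eIdem {A : Type*} [LinearOrder A] [Fintype A] (γ : Finset A) :
    MonoidAlgebra ℤ (Styl A) :=
  (((γᶜ).sort (· ≤ ·)).map (fun a => 1 - styGen a)).prod *
    ((γ.sort (· ≤ ·)).reverse.map styGen).prod

section Aux

variable {A : Type*} [LinearOrder A]

lemma stylCon_of_base {x y : FreeMonoid A} (h : StylicRel A x y) : stylCon A x y :=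
  ConGen.Rel.of _ _ h

omit [LinearOrder A] in
lemma ofList_cons' (b : A) (l : List A) : ofList (b :: l) = of b * ofList l := rfl

/-- Moving a large letter `a` leftwards through a decreasing word. -/
lemma move_left (a : A) : ∀ (t : List A) (b : A), (b :: t).Pairwise (· > ·) →
    (∀ x ∈ b :: t, x < a) →
    stylCon A (ofList ((b :: t) ++ [a])) (ofList (b :: a :: t)) := by
  intro t
  induction t with
  | nil =>
    intro b _ _
    exact (stylCon A).refl _
  | cons c t' ih =>
    intro b hp hlt
    have hbc : c < b := (List.pairwise_cons.1 hp).1 c List.mem_cons_self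
    have hba : b < a := hlt b List.mem_cons_self
    have h1 : stylCon A (ofList ((c :: t') ++ [a])) (ofList (c :: a :: t')) :=
      ih c (List.pairwise_cons.1 hp).2 (fun x hx => hlt x (List.mem_cons_of_mem _ hx))
    have h2 : stylCon A (ofList ((b :: c :: t') ++ [a])) (ofList (b :: c :: a :: t')) := by
      have := ((stylCon A).refl (of b)).mul h1
      simp [stylCon, ofList_cons', mul_assoc] at this
      exact this
    have h3 : stylCon A (ofList (b :: c :: a :: t')) (ofList (b :: a :: c :: t')) := by
      have hrel : stylCon A (ofList [b, c, a]) (ofList [b, a, c]) :=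
        stylCon_of_base (StylicRel.knuth1 hbc hba)
      have := hrel.mul ((stylCon A).refl (ofList t'))
      simp [stylCon, ← ofList_append, mul_assoc] at this
      exact this
    exact h2.trans h3

lemma col_absorb (a : A) (t : List A) (hp : t.Pairwise (· > ·))
    (hlt : ∀ x ∈ t, x < a) :
    stylCon A (ofList (a :: (t ++ [a]))) (ofList (a :: t)) := by
  cases t with
  | nil => exact stylCon_of_base (StylicRel.idem a)
  | cons b t' =>
    have hba : b < a := hlt b List.mem_cons_self
    have h1 : stylCon A (ofList (a :: ((b :: t') ++ [a]))) (ofList (a :: b :: a :: t')) := by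
      have := ((stylCon A).refl (of a)).mul (move_left a t' b hp hlt)
      simp [stylCon, ofList_cons'] at this
      exact this
    have h2 : stylCon A (ofList (a :: b :: a :: t')) (ofList (a :: a :: b :: t')) := by
      have hrel : stylCon A (ofList [a, b, a]) (ofList [a, a, b]) :=
        stylCon_of_base (StylicRel.knuth3 hba)
      have := hrel.mul ((stylCon A).refl (ofList t'))
      simp [stylCon, ← ofList_append, mul_assoc] at this
      exact this
    have h3 : stylCon A (ofList (a :: a :: b :: t')) (ofList (a :: b :: t')) := by
      have hrel : stylCon A (ofList [a, a]) (ofList [a]) :=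
        stylCon_of_base (StylicRel.idem a)
      have := hrel.mul ((stylCon A).refl (ofList (b :: t')))
      simp [stylCon, ← ofList_append, mul_assoc] at this
      exact this
    exact (h1.trans h2).trans h3

/-- A strictly decreasing word is idempotent in the stylic monoid. -/
lemma decreasing_idem : ∀ (t : List A), t.Pairwise (· > ·) →
    stylCon A (ofList (t ++ t)) (ofList t) := by
  intro t
  induction t with
  | nil => exact fun _ => (stylCon A).refl _
  | cons a t' ih =>
    intro hp
    have hp' := (List.pairwise_cons.1 hp).2
    have hlt : ∀ x ∈ t', x < a := (List.pairwise_cons.1 hp).1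
    have h1 : stylCon A (ofList ((a :: t') ++ (a :: t'))) (ofList ((a :: t') ++ t')) := by
      have e1 : (a :: t') ++ (a :: t') = (a :: (t' ++ [a])) ++ t' := by simp
      rw [e1, ofList_append, ofList_append]
      exact (col_absorb a t' hp' hlt).mul ((stylCon A).refl (ofList t'))
    have h2 : stylCon A (ofList ((a :: t') ++ t')) (ofList (a :: t')) := by
      have := ((stylCon A).refl (of a)).mul (ih hp')
      exact this
    exact h1.trans h2

lemma prod_map_styGen (l : List A) :
    (l.map styGen).prod = MonoidAlgebra.of ℤ (Styl A) ((stylCon A).mk' (ofList l)) := by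
  induction l with
  | nil => simp [show (ofList ([] : List A)) = 1 from rfl, MonoidAlgebra.one_def]
  | cons a l ih => simp [ofList_cons', map_mul, ih, styGen]

lemma column_sq [Fintype A] (γ : Finset A) :
    ((γ.sort (· ≤ ·)).reverse.map styGen).prod *
      ((γ.sort (· ≤ ·)).reverse.map styGen).prod =
      ((γ.sort (· ≤ ·)).reverse.map styGen).prod := by
  set l := (γ.sort (· ≤ ·)).reverse with hl
  have hpair : l.Pairwise (· > ·) := by
    rw [hl, List.pairwise_reverse]
    exact γ.sortedLT_sort.pairwise
  have hrel : stylCon A (ofList (l ++ l)) (ofList l) := decreasing_idem l hpair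
  have hq : (stylCon A).mk' (ofList (l ++ l)) = (stylCon A).mk' (ofList l) :=
    (Con.eq _).2 hrel
  rw [prod_map_styGen, ← map_mul, ← map_mul, ← ofList_append, hq]

end Aux

/-- `e_γ · γ = e_γ` in `ℤStyl(A)`, where the second `γ`
denotes the image of the decreasing word on `γ`. -/
theorem eIdem_mul_column {A : Type*} [LinearOrder A] [Fintype A]
    (γ : Finset A) :
    eIdem γ * ((γ.sort (· ≤ ·)).reverse.map styGen).prod = eIdem γ := by
  rw [eIdem, mul_assoc, column_sq]
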